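/- arXiv:1410.0635 — 4 statements merged into one kernel-verified Lean document; each statement's English description precedes it below -/
import Mathlib

section
/- The polynomial Q₂ = (∑ᵢ (xᵢ*)²)(∑ᵢ (vᵢ*)²) − (∑ᵢ xᵢ*vᵢ*)² on gal(n)* is invariant under the coadjoint action of Gal(n), and equals ‖x*‖²·‖proj_{(x*)^⊥}(v*)‖² whenever x* ≠ 0. -/
/-- A point of `gal(n)*`, written as a tuple `(K*, v*, x*, x₀*)`. -/
abbrev GalDual (n : ℕ) :=
  Matrix (Fin n) (Fin n) ℝ × (Fin n → ℝ) × (Fin n → ℝ) × ℝ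

/-- Coadjoint action of the rotation `ρ`: `(K*,v*,x*,x₀*) ↦ (ρK*ρ⁻¹, ρv*, ρx*, x₀*)`. -/
noncomputable def coadjRot {n : ℕ} (ρ : Matrix (Fin n) (Fin n) ℝ) (p : GalDual n) :
    GalDual n :=
  (ρ * p.1 * ρ⁻¹, ρ.mulVec p.2.1, ρ.mulVec p.2.2.1, p.2.2.2)

/-- Coadjoint action of the translation-boost `(v, x, x₀)` (computed modulo `gal(n)^⊥`). -/
noncomputable def coadjTB {n : ℕ} (v x : Fin n → ℝ) (x₀ : ℝ) (p : GalDual n) : GalDual n :=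
  (p.1 + Matrix.of (fun i j =>
      (1 / 2) * ((p.2.1 i * v j + p.2.2.1 i * x j) - (v i * p.2.1 j + x i * p.2.2.1 j))),
    fun i => p.2.1 i + x₀ * p.2.2.1 i,
    p.2.2.1,
    p.2.2.2 + ∑ i, v i * p.2.2.1 i)

/-- The polynomial `Q₂ = (∑(xᵢ*)²)(∑(vᵢ*)²) − (∑ xᵢ*vᵢ*)²` on `gal(n)*`. -/
def Q2 {n : ℕ} (p : GalDual n) : ℝ :=
  (∑ i, (p.2.2.1 i) ^ 2) * (∑ i, (p.2.1 i) ^ 2) - (∑ i, p.2.2.1 i * p.2.1 i) ^ 2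

open Matrix
private lemma rot_dot {n : ℕ} {ρ : Matrix (Fin n) (Fin n) ℝ}
    (h : ρᵀ * ρ = 1) (a b : Fin n → ℝ) :
    ρ.mulVec a ⬝ᵥ ρ.mulVec b = a ⬝ᵥ b := by
  rw [Matrix.dotProduct_mulVec]
  have : ρ.mulVec a = Matrix.vecMul a ρᵀ := by
    rw [← Matrix.mulVec_transpose, Matrix.transpose_transpose]
  rw [this, Matrix.vecMul_vecMul, h, Matrix.vecMul_one]

/-- `Q₂` is invariant under the coadjoint action of `Gal(n)`, and when `x* ≠ 0` it equals
`‖x*‖² · ‖proj_{(x*)^⊥}(v*)‖²`, where `proj_{(x*)^⊥}` is the orthogonal projection onto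
the hyperplane orthogonal to `x*`. -/
theorem Q2_coadjoint_invariant (n : ℕ) :
    (∀ (ρ : Matrix (Fin n) (Fin n) ℝ), ρ ∈ Matrix.orthogonalGroup (Fin n) ℝ →
      ∀ p : GalDual n, Q2 (coadjRot ρ p) = Q2 p) ∧
    (∀ (v x : Fin n → ℝ) (x₀ : ℝ) (p : GalDual n), Q2 (coadjTB v x x₀ p) = Q2 p) ∧
    (∀ p : GalDual n, p.2.2.1 ≠ 0 →
      Q2 p = (∑ i, (p.2.2.1 i) ^ 2) *
        ∑ i, (p.2.1 i -
          ((∑ j, p.2.1 j * p.2.2.1 j) / (∑ j, (p.2.2.1 j) ^ 2)) * p.2.2.1 i) ^ 2) := by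
  refine ⟨?_, ?_, ?_⟩
  · intro ρ hρ p
    have hT : ρᵀ * ρ = 1 := by
      have := (Matrix.mem_orthogonalGroup_iff' (A := ρ)).mp hρ
      simpa [Matrix.star_eq_conjTranspose, Matrix.conjTranspose] using this
    have key : ∀ a b : Fin n → ℝ,
        (∑ i, ρ.mulVec a i * ρ.mulVec b i) = ∑ i, a i * b i := by
      intro a b
      have := rot_dot hT a b
      simpa [dotProduct] using this
    simp only [Q2, coadjRot]
    have h1 := key p.2.2.1 p.2.2.1
    have h2 := key p.2.1 p.2.1
    have h3 := key p.2.2.1 p.2.1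
    simp only [← sq] at h1 h2
    rw [h1, h2, h3]
  · intro v x x₀ p
    simp only [Q2, coadjTB]
    set a := p.2.1
    set b := p.2.2.1
    have h1 : (∑ i, (a i + x₀ * b i) ^ 2)
        = (∑ i, a i ^ 2) + 2 * x₀ * (∑ i, b i * a i) + x₀ ^ 2 * (∑ i, b i ^ 2) := by
      rw [Finset.mul_sum, Finset.mul_sum, ← Finset.sum_add_distrib, ← Finset.sum_add_distrib]
      exact Finset.sum_congr rfl fun i _ => by ring
    have h2 : (∑ i, b i * (a i + x₀ * b i))
        = (∑ i, b i * a i) + x₀ * (∑ i, b i ^ 2) := by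
      rw [Finset.mul_sum, ← Finset.sum_add_distrib]
      exact Finset.sum_congr rfl fun i _ => by ring
    rw [h1, h2]; ring
  · intro p hp
    set a := p.2.1
    set b := p.2.2.1
    have hA : 0 < ∑ i, b i ^ 2 := by
      obtain ⟨i, hi⟩ := Function.ne_iff.mp hp
      exact Finset.sum_pos' (fun j _ => sq_nonneg _)
        ⟨i, Finset.mem_univ i, pow_two_pos_of_ne_zero hi⟩
    set C : ℝ := (∑ j, a j * b j) / (∑ j, (b j) ^ 2) with hC
    have h1 : (∑ i, (a i - C * b i) ^ 2)
        = (∑ i, a i ^ 2) - 2 * C * (∑ i, a i * b i) + C ^ 2 * (∑ i, b i ^ 2) := by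
      rw [show (∑ i, (a i - C * b i) ^ 2)
            = ∑ i, (a i ^ 2 - 2 * C * (a i * b i) + C ^ 2 * b i ^ 2) from
          Finset.sum_congr rfl fun i _ => by ring,
        Finset.sum_add_distrib, Finset.sum_sub_distrib, ← Finset.mul_sum, ← Finset.mul_sum]
    have hba : (∑ i, b i * a i) = ∑ i, a i * b i :=
      Finset.sum_congr rfl fun i _ => mul_comm _ _
    have hCmul : C * (∑ j, (b j) ^ 2) = ∑ j, a j * b j := by
      rw [hC, div_mul_cancel₀ _ (ne_of_gt hA)]
    change (∑ i, b i ^ 2) * (∑ i, a i ^ 2) - (∑ i, b i * a i) ^ 2 = _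
    simp only [Q2, h1, hba]
    have expand : (∑ i, (b i) ^ 2) *
        ((∑ i, a i ^ 2) - 2 * C * (∑ i, a i * b i) + C ^ 2 * (∑ i, b i ^ 2))
        = (∑ i, (b i) ^ 2) * (∑ i, a i ^ 2)
          - 2 * (∑ i, a i * b i) * (C * (∑ i, b i ^ 2))
          + (C * (∑ i, b i ^ 2)) ^ 2 := by ring
    rw [expand, hCmul]; ring
end

section
/- For n = 1, the algebra of polynomials on gal(1)* invariant under the coadjoint action of Gal(1) is generated by X₁², i.e., every invariant polynomial in (v₁*, x₁*, x₀*) is a polynomial in (x₁*)². -/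
open MvPolynomial

private lemma aeval_eq_eval' (f : Fin 3 → ℝ) (P : MvPolynomial (Fin 3) ℝ) :
    MvPolynomial.aeval f P = eval f P := by
  rw [← MvPolynomial.coe_aeval_eq_eval]; rfl

private lemma paeval_eq_eval (r : ℝ) (q : Polynomial ℝ) :
    Polynomial.aeval r q = Polynomial.eval r q := by
  rw [← Polynomial.coe_aeval_eq_eval]

private lemma coeff_comp_negX (q : Polynomial ℝ) (n : ℕ) :
    (q.comp (-Polynomial.X)).coeff n = (-1) ^ n * q.coeff n := by
  induction q using Polynomial.induction_on' with
  | add p r hp hr => simp [Polynomial.add_comp, hp, hr, mul_add]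
  | monomial m a =>
      rw [Polynomial.monomial_comp]
      rw [show (-Polynomial.X : Polynomial ℝ) ^ m
          = (-1 : ℝ) ^ m • Polynomial.X ^ m by
        rw [neg_pow]; simp [Polynomial.smul_eq_C_mul, mul_comm]]
      simp only [Polynomial.coeff_smul, Polynomial.coeff_C_mul, Polynomial.coeff_monomial,
        Polynomial.coeff_X_pow, smul_eq_mul]
      by_cases h : n = m
      · simp [h, mul_comm]
      · simp [if_neg (fun hc : m = n => h hc.symm)]
        exact fun hc => absurd hc h

private lemma even_mem (q : Polynomial ℝ) (hodd : ∀ n, Odd n → q.coeff n = 0) :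
    Polynomial.aeval (X 1 : MvPolynomial (Fin 3) ℝ) q
      ∈ Algebra.adjoin ℝ {(X 1 : MvPolynomial (Fin 3) ℝ) ^ 2} := by
  rw [Polynomial.aeval_eq_sum_range]
  apply Subalgebra.sum_mem
  intro i _
  rcases Nat.even_or_odd i with he | ho
  · obtain ⟨k, hk⟩ := he
    apply Subalgebra.smul_mem
    have hx : (X 1 : MvPolynomial (Fin 3) ℝ) ^ i
        = ((X 1 : MvPolynomial (Fin 3) ℝ) ^ 2) ^ k := by
      rw [← pow_mul]; congr 1; omega
    rw [hx]
    exact Subalgebra.pow_mem _ (Algebra.self_mem_adjoin_singleton ℝ _) k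
  · rw [hodd i ho, zero_smul]
    exact Subalgebra.zero_mem _

/-- For `n = 1`:  the algebra of polynomials on `gal(1)*` invariant under the coadjoint
action of `Gal(1)` is generated by `X₁²`.  Points of `gal(1)*` are written `(v₁*, x₁*, x₀*)`
(coordinates `0, 1, 2`); the coadjoint action of the reflection `−1 ∈ O(1)` is
`(v₁*, x₁*, x₀*) ↦ (−v₁*, −x₁*, x₀*)` and of the translation-boost `(v₁, x₁, x₀)` is
`(v₁*, x₁*, x₀*) ↦ (v₁* + x₀x₁*, x₁*, x₀* + v₁x₁*)`.  A polynomial `P` is invariant under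
the coadjoint action if and only if it is a polynomial in `(x₁*)²`. -/
theorem gal1_invariants (P : MvPolynomial (Fin 3) ℝ) :
    ((∀ pt : Fin 3 → ℝ,
        eval (![-pt 0, -pt 1, pt 2]) P = eval pt P) ∧
     (∀ (v₁ x₀ : ℝ) (pt : Fin 3 → ℝ),
        eval (![pt 0 + x₀ * pt 1, pt 1, pt 2 + v₁ * pt 1]) P = eval pt P)) ↔
    P ∈ Algebra.adjoin ℝ {(X 1 : MvPolynomial (Fin 3) ℝ) ^ 2} := by
  constructor
  · rintro ⟨h1, h2⟩
    -- the one-variable polynomial  b ↦ P(0, b, 0)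
    set q : Polynomial ℝ :=
      MvPolynomial.aeval ![0, Polynomial.X, 0] P with hqdef
    have key : ∀ b : ℝ, Polynomial.eval b q = eval ![0, b, 0] P := by
      intro b
      rw [hqdef, ← paeval_eq_eval, MvPolynomial.comp_aeval_apply]
      have hvec : (fun i => Polynomial.aeval b
          ((![0, Polynomial.X, 0] : Fin 3 → Polynomial ℝ) i)) = ![(0:ℝ), b, 0] := by
        funext i; fin_cases i <;> simp
      rw [hvec, aeval_eq_eval']
    -- P depends only on the second coordinate
    have hq_eval : ∀ pt : Fin 3 → ℝ, eval pt P = Polynomial.eval (pt 1) q := by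
      intro pt
      set r : Polynomial ℝ :=
        MvPolynomial.aeval ![Polynomial.C (pt 0), Polynomial.X, Polynomial.C (pt 2)] P - q
        with hrdef
      have hre : ∀ t : ℝ, Polynomial.eval t r
          = eval ![pt 0, t, pt 2] P - Polynomial.eval t q := by
        intro t
        rw [hrdef, Polynomial.eval_sub]
        congr 1
        rw [← paeval_eq_eval, MvPolynomial.comp_aeval_apply]
        have hvec : (fun i => Polynomial.aeval t
            ((![Polynomial.C (pt 0), Polynomial.X, Polynomial.C (pt 2)] : Fin 3 → Polynomial ℝ) i))
            = ![pt 0, t, pt 2] := by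
          funext i; fin_cases i <;> simp
        rw [hvec, aeval_eq_eval']
      have hr0 : r = 0 := by
        apply Polynomial.eq_zero_of_infinite_isRoot
        apply Set.Infinite.mono (s := {t : ℝ | t ≠ 0})
        · intro t ht
          have h2' := h2 (pt 2 / t) (pt 0 / t) ![0, t, 0]
          simp only [Matrix.cons_val_zero, Matrix.cons_val_one, Matrix.head_cons,
            Matrix.cons_val_two, Matrix.tail_cons] at h2'
          rw [zero_add, zero_add, div_mul_cancel₀ _ ht, div_mul_cancel₀ _ ht] at h2'
          simp only [Set.mem_setOf_eq, Polynomial.IsRoot, hre t, h2', key t, sub_self]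
        · exact Set.infinite_of_not_bddAbove (by
            intro ⟨u, hu⟩
            have h1' := hu (show max 1 (u + 1) ∈ {t : ℝ | t ≠ 0} by
              simp only [Set.mem_setOf_eq]
              positivity)
            have hle : (1 : ℝ) ≤ u ∧ u + 1 ≤ u :=
              ⟨le_trans (le_max_left _ _) h1', le_trans (le_max_right _ _) h1'⟩
            linarith [hle.1, hle.2])
      have hz := hre (pt 1)
      rw [hr0] at hz
      simp only [Polynomial.eval_zero] at hz
      have hpt : pt = ![pt 0, pt 1, pt 2] := by
        funext i; fin_cases i <;> rfl
      rw [← hpt] at hz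
      linarith
    -- q is an even polynomial
    have heven : q.comp (-Polynomial.X) = q := by
      apply Polynomial.funext
      intro b
      rw [Polynomial.eval_comp]
      simp only [Polynomial.eval_neg, Polynomial.eval_X]
      rw [key (-b), key b]
      have h1' := h1 ![0, b, 0]
      simp only [Matrix.cons_val_zero, Matrix.cons_val_one, Matrix.head_cons,
        Matrix.cons_val_two, Matrix.tail_cons, neg_zero] at h1'
      exact h1'
    have hodd : ∀ n, Odd n → q.coeff n = 0 := by
      intro n hn
      have hc := coeff_comp_negX q n
      rw [heven, hn.neg_one_pow, neg_one_mul] at hc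
      linarith
    -- P is the image of q under X ↦ X 1
    have hP : P = Polynomial.aeval (X 1 : MvPolynomial (Fin 3) ℝ) q := by
      apply MvPolynomial.funext
      intro x
      rw [hq_eval x]
      rw [show eval x (Polynomial.aeval (X 1 : MvPolynomial (Fin 3) ℝ) q)
          = MvPolynomial.aeval x (Polynomial.aeval (X 1 : MvPolynomial (Fin 3) ℝ) q)
          from (aeval_eq_eval' x _).symm]
      rw [← Polynomial.aeval_algHom_apply (MvPolynomial.aeval x)
        (X 1 : MvPolynomial (Fin 3) ℝ) q]
      rw [MvPolynomial.aeval_X, paeval_eq_eval]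
    rw [hP]
    exact even_mem q hodd
  · intro hP
    constructor
    · intro pt
      induction hP using Algebra.adjoin_induction with
      | mem x hx =>
          rw [Set.mem_singleton_iff] at hx
          subst hx
          simp [neg_sq]
      | algebraMap r => simp
      | add x y _ _ hx hy => simp [hx, hy]
      | mul x y _ _ hx hy => simp [hx, hy]
    · intro v₁ x₀ pt
      induction hP using Algebra.adjoin_induction with
      | mem x hx =>
          rw [Set.mem_singleton_iff] at hx
          subst hx
          simp
      | algebraMap r => simp
      | add x y _ _ hx hy => simp [hx, hy]
      | mul x y _ _ hx hy => simp [hx, hy]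
end

section
/- Let A : V₁ → V₂ be a linear map between finite-dimensional vector spaces with chosen bases. The matrix entry of the k-th exterior power Λᵏ A in position (e_{i₁}∧⋯∧e_{i_k}, f_{j₁}∧⋯∧f_{j_k}) equals the determinant of the k×k submatrix of the matrix of A formed from rows j₁,…,j_k and columns i₁,…,i_k. In particular, for an endomorphism A of an n-dimensional space, the coefficient of x^{n−k} in the characteristic polynomial of A equals ±tr(Λᵏ A). -/
open ExteriorAlgebra

section AuxMinors
open Finset Polynomial

lemma alt_expand {R : Type*} [CommRing R] {M N : Type*} [AddCommGroup M] [Module R M]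
    [AddCommGroup N] [Module R N] {k n : ℕ} (f : M [⋀^Fin k]→ₗ[R] N)
    (w : Fin n → M) (c : Fin n → Fin k → R) :
    f (fun t => ∑ j, c j t • w j) =
      ∑ s : Finset (Fin n), if h : s.card = k then
        (Matrix.det (Matrix.of fun a b => c (s.orderEmbOfFin h a) b)) •
          f (fun t => w (s.orderEmbOfFin h t))
      else 0 := by
  classical
  have h1 : f (fun t => ∑ j, c j t • w j)
      = ∑ r : Fin k → Fin n, (∏ t, c (r t) t) • f (fun t => w (r t)) := by
    have := f.toMultilinearMap.map_sum (g := fun (t : Fin k) (j : Fin n) => c j t • w j)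
    refine this.trans (Finset.sum_congr rfl fun r _ => ?_)
    exact f.toMultilinearMap.map_smul_univ (fun t => c (r t) t) (fun t => w (r t))
  rw [h1, ← Finset.sum_fiberwise_of_maps_to
    (g := fun r : Fin k → Fin n => Finset.image r Finset.univ) (fun r _ => Finset.mem_univ _)]
  refine Finset.sum_congr rfl fun s _ => ?_
  by_cases h : s.card = k
  · rw [dif_pos h]
    have hembinj : Function.Injective (s.orderEmbOfFin h) := (s.orderEmbOfFin h).injective
    have hfiber : Finset.univ.filter
          (fun r : Fin k → Fin n => Finset.image r Finset.univ = s)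
        = Finset.image (fun σ : Equiv.Perm (Fin k) => fun t => s.orderEmbOfFin h (σ t))
            Finset.univ := by
      ext r
      simp only [Finset.mem_filter, Finset.mem_univ, true_and, Finset.mem_image]
      constructor
      · intro hr
        have hrinj : Function.Injective r := by
          have hc : (Finset.univ.image r).card = (Finset.univ : Finset (Fin k)).card := by
            rw [hr, h, Finset.card_univ, Fintype.card_fin]
          have hio := Finset.injOn_of_card_image_eq hc
          exact fun a b hab => hio (Finset.mem_coe.2 (Finset.mem_univ a))
            (Finset.mem_coe.2 (Finset.mem_univ b)) hab
        have hmem : ∀ t, r t ∈ s := fun t => hr ▸ Finset.mem_image_of_mem r (Finset.mem_univ t)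
        set g : Fin k → Fin k := fun t => (s.orderIsoOfFin h).symm ⟨r t, hmem t⟩ with hg
        have hginj : Function.Injective g := by
          intro a b hab
          apply hrinj
          have := congrArg (fun x => ((s.orderIsoOfFin h) x : Fin n)) hab
          simpa [hg] using this
        refine ⟨Equiv.ofBijective g (Finite.injective_iff_bijective.1 hginj), ?_⟩
        funext t
        show s.orderEmbOfFin h (g t) = r t
        rw [← Finset.coe_orderIsoOfFin_apply]
        simp [hg]
      · rintro ⟨σ, rfl⟩
        have hrange := Finset.range_orderEmbOfFin s h
        ext x
        simp only [Finset.mem_image, Finset.mem_univ, true_and]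
        constructor
        · rintro ⟨t, rfl⟩; exact s.orderEmbOfFin_mem h (σ t)
        · intro hx
          have : x ∈ Set.range (s.orderEmbOfFin h) := by rw [hrange]; exact hx
          obtain ⟨t, ht⟩ := this
          exact ⟨σ.symm t, by simp [ht]⟩
    rw [hfiber, Finset.sum_image (fun σ _ σ' _ hσ =>
      Equiv.ext fun t => hembinj (congrFun hσ t))]
    rw [Matrix.det_apply, Finset.sum_smul]
    refine Finset.sum_congr rfl fun σ _ => ?_
    have hperm : f (fun t => w (s.orderEmbOfFin h (σ t)))
        = Equiv.Perm.sign σ • f (fun t => w (s.orderEmbOfFin h t)) :=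
      f.map_perm (fun t => w (s.orderEmbOfFin h t)) σ
    rw [hperm]
    simp only [Matrix.of_apply]
    rw [Units.smul_def, Units.smul_def, zsmul_eq_mul, ← Int.cast_smul_eq_zsmul R, smul_smul]
    rw [mul_comm]
  · rw [dif_neg h]
    refine Finset.sum_eq_zero fun r hr => ?_
    simp only [Finset.mem_filter] at hr
    have hninj : ¬ Function.Injective r := by
      intro hinj
      exact h (by rw [← hr.2, Finset.card_image_of_injective _ hinj, Finset.card_univ,
        Fintype.card_fin])
    have : ¬ Function.Injective (fun t => w (r t)) := fun hw =>
      hninj fun a b hab => hw (by simp [hab])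
    rw [f.map_eq_zero_of_not_injective _ this, smul_zero]


lemma charpoly_coeff_minors (N K : ℕ) (hKN : K ≤ N) (B : Matrix (Fin N) (Fin N) ℝ) :
    B.charpoly.coeff (N - K) =
      (-1) ^ K * ∑ s : Finset (Fin N),
        if h : s.card = K then
          (B.submatrix (fun t : Fin K => s.orderEmbOfFin h t)
            (fun t => s.orderEmbOfFin h t)).det
        else 0 := by
  classical
  set m : Fin N → Fin N → ℝ[X] := fun i j => if i = j then X else 0 with hm
  set m' : Fin N → Fin N → ℝ[X] := fun i j => -(Polynomial.C (B i j)) with hm'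
  have hch : Matrix.charmatrix B = Matrix.of (m + m') := by
    ext i j
    by_cases hij : i = j
    · subst hij
      simp [Matrix.charmatrix_apply_eq, hm, hm', sub_eq_add_neg]
    · simp [Matrix.charmatrix_apply_ne _ _ _ hij, hm, hm', hij]
  have hdet : B.charpoly = ∑ s : Finset (Fin N),
      (X : ℝ[X]) ^ s.card * ((-1) ^ sᶜ.card *
        Polynomial.C ((B.submatrix (sᶜ.orderEmbOfFin rfl) (sᶜ.orderEmbOfFin rfl)).det)) := by
    rw [Matrix.charpoly, hch]
    have : (Matrix.of (m + m')).det = Matrix.detRowAlternating (m + m') := rfl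
    rw [this]
    have h2 : Matrix.detRowAlternating (m + m')
        = ∑ s : Finset (Fin N), Matrix.detRowAlternating (s.piecewise m m') :=
      (Matrix.detRowAlternating (R := ℝ[X]) (n := Fin N)).toMultilinearMap.map_add_univ m m'
    rw [h2]
    refine Finset.sum_congr rfl fun s _ => ?_
    set k := s.card
    set l := sᶜ.card
    have hk : s.card = k := rfl
    have hl : sᶜ.card = l := rfl
    set e := finSumEquivOfFinset hk hl with he
    have h1 : Matrix.detRowAlternating (s.piecewise m m')
        = (Matrix.of (s.piecewise m m')).det := rfl
    rw [h1, ← Matrix.det_submatrix_equiv_self e]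
    have hblock : (Matrix.of (s.piecewise m m')).submatrix e e
        = Matrix.fromBlocks ((X : ℝ[X]) • 1) 0
            (Matrix.of fun p q => -(Polynomial.C (B (sᶜ.orderEmbOfFin hl p) (s.orderEmbOfFin hk q))))
            (Matrix.of fun p q => -(Polynomial.C (B (sᶜ.orderEmbOfFin hl p) (sᶜ.orderEmbOfFin hl q)))) := by
      refine Matrix.ext fun i j => ?_
      cases i with
      | inl p =>
        have hrow : e (Sum.inl p) = s.orderEmbOfFin hk p := finSumEquivOfFinset_inl hk hl p
        have hmem : s.orderEmbOfFin hk p ∈ s := s.orderEmbOfFin_mem hk p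
        cases j with
        | inl q =>
          have hcol : e (Sum.inl q) = s.orderEmbOfFin hk q := finSumEquivOfFinset_inl hk hl q
          rw [Matrix.submatrix_apply, hrow, hcol, Matrix.of_apply,
            Finset.piecewise_eq_of_mem _ _ _ hmem, Matrix.fromBlocks_apply₁₁]
          show (if s.orderEmbOfFin hk p = s.orderEmbOfFin hk q then (X : ℝ[X]) else 0)
            = (X • (1 : Matrix (Fin k) (Fin k) ℝ[X])) p q
          rw [Matrix.smul_apply, Matrix.one_apply]
          by_cases hpq : p = q
          · simp [hpq]
          · rw [if_neg (fun hco => hpq ((s.orderEmbOfFin hk).injective hco)), if_neg hpq,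
              smul_zero]
        | inr q =>
          have hcol : e (Sum.inr q) = sᶜ.orderEmbOfFin hl q := finSumEquivOfFinset_inr hk hl q
          have hne : s.orderEmbOfFin hk p ≠ sᶜ.orderEmbOfFin hl q := by
            intro hco
            have h2 := sᶜ.orderEmbOfFin_mem hl q
            rw [← hco] at h2
            exact (Finset.mem_compl.1 h2) hmem
          rw [Matrix.submatrix_apply, hrow, hcol, Matrix.of_apply,
            Finset.piecewise_eq_of_mem _ _ _ hmem, Matrix.fromBlocks_apply₁₂]
          show (if s.orderEmbOfFin hk p = sᶜ.orderEmbOfFin hl q then (X : ℝ[X]) else 0)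
            = (0 : Matrix (Fin k) (Fin l) ℝ[X]) p q
          rw [if_neg hne, Matrix.zero_apply]
      | inr p =>
        have hrow : e (Sum.inr p) = sᶜ.orderEmbOfFin hl p := finSumEquivOfFinset_inr hk hl p
        have hmem : sᶜ.orderEmbOfFin hl p ∉ s := Finset.mem_compl.1 (sᶜ.orderEmbOfFin_mem hl p)
        cases j with
        | inl q =>
          have hcol : e (Sum.inl q) = s.orderEmbOfFin hk q := finSumEquivOfFinset_inl hk hl q
          rw [Matrix.submatrix_apply, hrow, hcol, Matrix.of_apply,
            Finset.piecewise_eq_of_notMem _ _ _ hmem, Matrix.fromBlocks_apply₂₁,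
            Matrix.of_apply]
        | inr q =>
          have hcol : e (Sum.inr q) = sᶜ.orderEmbOfFin hl q := finSumEquivOfFinset_inr hk hl q
          rw [Matrix.submatrix_apply, hrow, hcol, Matrix.of_apply,
            Finset.piecewise_eq_of_notMem _ _ _ hmem, Matrix.fromBlocks_apply₂₂,
            Matrix.of_apply]
    rw [hblock, Matrix.det_fromBlocks_zero₁₂, Matrix.det_smul, Matrix.det_one, mul_one]
    congr 1
    · simp [Fintype.card_fin]
    · have hneg : (Matrix.of fun p q =>
          -(Polynomial.C (B (sᶜ.orderEmbOfFin hl p) (sᶜ.orderEmbOfFin hl q))))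
          = -((B.submatrix (sᶜ.orderEmbOfFin hl) (sᶜ.orderEmbOfFin hl)).map Polynomial.C) := by
        ext p q
        simp [Matrix.submatrix_apply]
      rw [hneg, Matrix.det_neg]
      have hmd := (Polynomial.C (R := ℝ)).map_det (B.submatrix (sᶜ.orderEmbOfFin hl) (sᶜ.orderEmbOfFin hl))
      rw [RingHom.mapMatrix_apply] at hmd
      rw [← hmd]
      simp [Fintype.card_fin]
      exact Or.inl rfl
  -- take coefficients
  rw [hdet, Polynomial.finset_sum_coeff]
  have hcoeff : ∀ s : Finset (Fin N),
      ((X : ℝ[X]) ^ s.card * ((-1) ^ sᶜ.card *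
        Polynomial.C ((B.submatrix (sᶜ.orderEmbOfFin rfl) (sᶜ.orderEmbOfFin rfl)).det))).coeff (N - K)
      = if N - K = s.card then
          ((-1 : ℝ) ^ sᶜ.card * (B.submatrix (sᶜ.orderEmbOfFin rfl) (sᶜ.orderEmbOfFin rfl)).det)
        else 0 := by
    intro s
    have : (X : ℝ[X]) ^ s.card * ((-1) ^ sᶜ.card *
        Polynomial.C ((B.submatrix (sᶜ.orderEmbOfFin rfl) (sᶜ.orderEmbOfFin rfl)).det))
        = Polynomial.C ((-1 : ℝ) ^ sᶜ.card *
            (B.submatrix (sᶜ.orderEmbOfFin rfl) (sᶜ.orderEmbOfFin rfl)).det) * X ^ s.card := by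
      rw [map_mul, map_pow, map_neg, map_one]
      ring
    rw [this, Polynomial.coeff_C_mul_X_pow]
  simp only [hcoeff]
  -- reindex by complement
  have hre : ∑ s : Finset (Fin N), (if N - K = s.card then
        ((-1 : ℝ) ^ sᶜ.card * (B.submatrix (sᶜ.orderEmbOfFin rfl) (sᶜ.orderEmbOfFin rfl)).det)
      else 0)
      = ∑ s : Finset (Fin N), (if N - K = sᶜ.card then
        ((-1 : ℝ) ^ s.card * (B.submatrix (s.orderEmbOfFin rfl) (s.orderEmbOfFin rfl)).det)
      else 0) := by
    refine Fintype.sum_bijective (·ᶜ) compl_involutive.bijective _ _ fun s => ?_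
    simp [compl_compl]
  rw [hre, Finset.mul_sum]
  refine Finset.sum_congr rfl fun s _ => ?_
  have hsle : s.card ≤ N := by
    simpa using Finset.card_le_univ s
  have hcompl : sᶜ.card = N - s.card := by
    simp [Finset.card_compl]
  by_cases h : s.card = K
  · rw [dif_pos h, if_pos (by omega)]
    subst h
    simp
  · rw [dif_neg h, if_neg (by omega), mul_zero]


end AuxMinors

/-- (1) For a linear map `A : V₁ → V₂` and bases `b₁`, `b₂`, the matrix entry of the `k`-th
exterior power `Λᵏ A` in position `(e_{i₁}∧⋯∧e_{i_k}, f_{j₁}∧⋯∧f_{j_k})` is the `k×k`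
minor of the matrix of `A` with rows `j₁,…,j_k` and columns `i₁,…,i_k`:  equivalently,
`Λᵏ A (e_{i₁}∧⋯∧e_{i_k})` expands in the wedge basis of `Λᵏ V₂` with these minors as
coefficients.  (2) For an endomorphism of an `N`-dimensional space with matrix `B`, the
coefficient of `x^{N−K}` in `charpoly(B) = det(xI − B)` is
`(−1)^K tr(Λᵏ B)`, where `tr(Λᵏ B)` is the sum of all principal `K×K` minors of `B`. -/
theorem exterior_power_minors_and_charpoly
    (m n k : ℕ) (V₁ V₂ : Type*) [AddCommGroup V₁] [Module ℝ V₁]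
    [AddCommGroup V₂] [Module ℝ V₂]
    (b₁ : Module.Basis (Fin m) ℝ V₁) (b₂ : Module.Basis (Fin n) ℝ V₂)
    (A : V₁ →ₗ[ℝ] V₂) (i : Fin k → Fin m) (hi : StrictMono i) :
    (ExteriorAlgebra.map A (ExteriorAlgebra.ιMulti ℝ k fun t => b₁ (i t)) =
      ∑ s : Finset (Fin n),
        if h : s.card = k then
          ((LinearMap.toMatrix b₁ b₂ A).submatrix
              (fun t : Fin k => s.orderEmbOfFin h t) i).det •
            ExteriorAlgebra.ιMulti ℝ k (fun t => b₂ (s.orderEmbOfFin h t))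
        else 0) ∧
    (∀ (N K : ℕ), K ≤ N → ∀ B : Matrix (Fin N) (Fin N) ℝ,
      B.charpoly.coeff (N - K) =
        (-1) ^ K * ∑ s : Finset (Fin N),
          if h : s.card = K then
            (B.submatrix (fun t : Fin K => s.orderEmbOfFin h t)
              (fun t => s.orderEmbOfFin h t)).det
          else 0) := by
  constructor
  · rw [ExteriorAlgebra.map_apply_ιMulti]
    have hA : (A ∘ fun t => b₁ (i t))
        = fun t => ∑ j, (LinearMap.toMatrix b₁ b₂ A) j (i t) • b₂ j := by
      funext t
      rw [Function.comp_apply]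
      conv_lhs => rw [← b₂.sum_repr (A (b₁ (i t)))]
      refine Finset.sum_congr rfl fun j _ => ?_
      rw [LinearMap.toMatrix_apply]
    rw [hA, alt_expand (ExteriorAlgebra.ιMulti ℝ k) b₂
      (fun j t => (LinearMap.toMatrix b₁ b₂ A) j (i t))]
    refine Finset.sum_congr rfl fun s _ => ?_
    by_cases h : s.card = k
    · rw [dif_pos h, dif_pos h]
      rfl
    · rw [dif_neg h, dif_neg h]
  · exact fun N K hKN B => charpoly_coeff_minors N K hKN B
end

section
/- Let K' = [[K*, v*, x*],[−v*ᵀ, 0, 0],[−x*ᵀ, 0, 0]] be skew-symmetric with K* ∈ so(n), v*,x* ∈ ℝⁿ, v*∧x* ≠ 0, and set ω = (v*∧x*)/‖v*∧x*‖. Then the coefficient of e_{n+1}∧e_{n+2} in (Λ²K')ω equals ‖v*∧x*‖, i.e., equals √((‖x*‖²‖v*‖² − (x*·v*)²)). -/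
/-- The skew-symmetric matrix `K' = [[K*, v*, x*],[−v*ᵀ, 0, 0],[−x*ᵀ, 0, 0]]`. -/
def Kprime (n : ℕ) (K : Matrix (Fin n) (Fin n) ℝ) (v x : Fin n → ℝ) :
    Matrix (Fin (n + 2)) (Fin (n + 2)) ℝ :=
  Matrix.of fun i j =>
    if hi : i.val < n then
      if hj : j.val < n then K ⟨i.val, hi⟩ ⟨j.val, hj⟩
      else if j.val = n then v ⟨i.val, hi⟩
      else x ⟨i.val, hi⟩
    else if hj : j.val < n then
      (if i.val = n then -v ⟨j.val, hj⟩ else -x ⟨j.val, hj⟩)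
    else 0

/-- The inclusion `ℝⁿ ⊆ ℝ^{n+2}` as the span of the first `n` standard basis vectors. -/
def embRn (n : ℕ) (w : Fin n → ℝ) : Fin (n + 2) → ℝ :=
  fun i => if h : i.val < n then w ⟨i.val, h⟩ else 0


open RealInnerProductSpace in
theorem my_disc_pos (n : ℕ) (v x : Fin n → ℝ) (hindep : LinearIndependent ℝ ![v, x]) :
    0 < (∑ i, (x i) ^ 2) * (∑ i, (v i) ^ 2) - (∑ i, x i * v i) ^ 2 := by
  let v' : EuclideanSpace ℝ (Fin n) := WithLp.toLp 2 v
  let x' : EuclideanSpace ℝ (Fin n) := WithLp.toLp 2 x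
  have hvx : ∀ (a b : ℝ), a • x' + b • v' = 0 → a = 0 ∧ b = 0 := by
    intro a b hab
    have := LinearIndependent.pair_iff.mp hindep b a ?_
    · exact ⟨this.2, this.1⟩
    · funext i; have h := congrFun (congrArg WithLp.ofLp hab) i
      simp [x', v'] at h
      show b * v i + a * x i = 0
      linarith
  have hx0 : x' ≠ 0 := fun h => one_ne_zero (hvx 1 0 (by simp [h])).1
  have hv0 : v' ≠ 0 := fun h => one_ne_zero (hvx 0 1 (by simp [h])).2
  have hxs : ‖x'‖ ^ 2 = ∑ i, (x i) ^ 2 := by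
    rw [EuclideanSpace.norm_eq, Real.sq_sqrt (by positivity)]
    simp [x', sq_abs]
  have hvs : ‖v'‖ ^ 2 = ∑ i, (v i) ^ 2 := by
    rw [EuclideanSpace.norm_eq, Real.sq_sqrt (by positivity)]
    simp [v', sq_abs]
  have hinner : ⟪x', v'⟫ = ∑ i, x i * v i := by
    simp [PiLp.inner_apply, RCLike.inner_apply, x', v', mul_comm]
  have h1 : ⟪x', v'⟫ < ‖x'‖ * ‖v'‖ := by
    rw [inner_lt_norm_mul_iff_real]
    intro h
    have h2 : (-‖v'‖) • x' + ‖x'‖ • v' = 0 := by rw [neg_smul, h]; abel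
    exact hx0 (norm_eq_zero.mp (hvx _ _ h2).2)
  have h2 : ⟪x', -v'⟫ < ‖x'‖ * ‖v'‖ := by
    have := inner_lt_norm_mul_iff_real (x := x') (y := -v')
    rw [norm_neg] at this
    rw [this]
    intro h
    have h2' : ‖v'‖ • x' + ‖x'‖ • v' = 0 := by rw [h, smul_neg]; abel
    exact hx0 (norm_eq_zero.mp (hvx ‖v'‖ ‖x'‖ h2').2)
  rw [inner_neg_right] at h2
  rw [hinner] at h1 h2
  have habs : |∑ i, x i * v i| < ‖x'‖ * ‖v'‖ := abs_lt.mpr ⟨by linarith, h1⟩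
  calc (0:ℝ) < (‖x'‖ * ‖v'‖)^2 - (∑ i, x i * v i)^2 := by
        nlinarith [abs_nonneg (∑ i, x i * v i), sq_abs (∑ i, x i * v i)]
    _ = _ := by rw [mul_pow, hxs, hvs]

theorem my_mulVec_n (n : ℕ) (K : Matrix (Fin n) (Fin n) ℝ) (v x w : Fin n → ℝ) :
    (Kprime n K v x).mulVec (embRn n w) ⟨n, by linarith⟩ = -∑ i, v i * w i := by
  simp [Kprime, embRn, Matrix.mulVec, dotProduct, Fin.sum_univ_castSucc]

theorem my_mulVec_n1 (n : ℕ) (K : Matrix (Fin n) (Fin n) ℝ) (v x w : Fin n → ℝ) :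
    (Kprime n K v x).mulVec (embRn n w) ⟨n + 1, by linarith⟩ = -∑ i, x i * w i := by
  simp [Kprime, embRn, Matrix.mulVec, dotProduct, Fin.sum_univ_castSucc]

/-- Let `K' = [[K*, v*, x*],[−v*ᵀ, 0, 0],[−x*ᵀ, 0, 0]]` with `K* ∈ so(n)` and `v* ∧ x* ≠ 0`,
and let `ω = (v* ∧ x*)/‖v* ∧ x*‖`.  Since `(Λ²K')ω = ‖v*∧x*‖⁻¹ · (K'v* ∧ K'x*)`, the
coefficient of `e_{n+1} ∧ e_{n+2}` in `(Λ²K')ω` — i.e. `‖v*∧x*‖⁻¹` times the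
`2×2` minor of the pair `(K'v*, K'x*)` in the last two coordinates — equals
`‖v* ∧ x*‖ = √(‖x*‖²‖v*‖² − (x*·v*)²)`. -/
theorem Kprime_wedge_omega_coefficient (n : ℕ) (K : Matrix (Fin n) (Fin n) ℝ)
    (hK : K.transpose = -K) (v x : Fin n → ℝ)
    (hindep : LinearIndependent ℝ ![v, x]) :
    (Real.sqrt ((∑ i, (x i) ^ 2) * (∑ i, (v i) ^ 2) - (∑ i, x i * v i) ^ 2))⁻¹ *
      ((Kprime n K v x).mulVec (embRn n v) ⟨n, by omega⟩ *
        (Kprime n K v x).mulVec (embRn n x) ⟨n + 1, by omega⟩ -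
       (Kprime n K v x).mulVec (embRn n v) ⟨n + 1, by omega⟩ *
        (Kprime n K v x).mulVec (embRn n x) ⟨n, by omega⟩) =
    Real.sqrt ((∑ i, (x i) ^ 2) * (∑ i, (v i) ^ 2) - (∑ i, x i * v i) ^ 2) := by
  set D := (∑ i, (x i) ^ 2) * (∑ i, (v i) ^ 2) - (∑ i, x i * v i) ^ 2 with hD
  have hDpos : 0 < D := my_disc_pos n v x hindep
  have hs : 0 < Real.sqrt D := Real.sqrt_pos.mpr hDpos
  rw [my_mulVec_n n K v x v, my_mulVec_n1 n K v x x, my_mulVec_n1 n K v x v,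
    my_mulVec_n n K v x x]
  have hcomm : (∑ i, v i * x i) = ∑ i, x i * v i := by
    exact Finset.sum_congr rfl fun i _ => mul_comm _ _
  have hvv : (∑ i, v i * v i) = ∑ i, (v i)^2 := by
    exact Finset.sum_congr rfl fun i _ => (sq (v i)).symm
  have hxx : (∑ i, x i * x i) = ∑ i, (x i)^2 := by
    exact Finset.sum_congr rfl fun i _ => (sq (x i)).symm
  rw [hcomm, hvv, hxx]
  have key : -(∑ i, (v i)^2) * -(∑ i, (x i)^2) - -(∑ i, x i * v i) * -(∑ i, x i * v i)
      = D := by rw [hD]; ring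
  rw [key]
  rw [← Real.mul_self_sqrt hDpos.le]
  field_simp
  rw [Real.sqrt_sq hs.le]
end
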